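/- Let n ≥ q ≥ 1 be integers and let f : ℝ^q → ℂ be continuous and rapidly decreasing on the positive orthant, i.e. for every N ∈ ℕ there is C_N ≥ 0 with |f(u)| ≤ C_N·(1+‖u‖)^{−N} whenever all coordinates of u are ≥ 0. Then lim_{t→∞} t^{2q}·∫_{S_n} f(t²σ₁, …, t²σ_q) dσ = (1/(n−q)!)·∫_{[0,∞)^q} f(u) du. -/

import Mathlib

open MeasureTheory

lemma simplex_empty (m : ℕ) {r : ℝ} (hr : r < 0) :
    {y : Fin m → ℝ | (∀ j, 0 ≤ y j) ∧ ∑ j, y j ≤ r} = ∅ := by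
  ext y
  simp only [Set.mem_setOf_eq, Set.mem_empty_iff_false, iff_false, not_and]
  intro hy hsum
  have : (0:ℝ) ≤ ∑ j, y j := Finset.sum_nonneg fun j _ => hy j
  linarith

lemma simplex_measurable (m : ℕ) (r : ℝ) :
    MeasurableSet {y : Fin m → ℝ | (∀ j, 0 ≤ y j) ∧ ∑ j, y j ≤ r} := by
  have : {y : Fin m → ℝ | (∀ j, 0 ≤ y j) ∧ ∑ j, y j ≤ r}
      = (⋂ j, {y : Fin m → ℝ | 0 ≤ y j}) ∩ {y : Fin m → ℝ | ∑ j, y j ≤ r} := by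
    ext y; simp [Set.mem_iInter]
  rw [this]
  exact (MeasurableSet.iInter fun j =>
      measurableSet_le measurable_const (measurable_pi_apply j)).inter
    (measurableSet_le (Finset.measurable_sum _ fun j _ => measurable_pi_apply j)
      measurable_const)

lemma simplex_volume (m : ℕ) : ∀ {r : ℝ}, 0 ≤ r →
    volume {y : Fin m → ℝ | (∀ j, 0 ≤ y j) ∧ ∑ j, y j ≤ r}
      = ENNReal.ofReal (r ^ m / m.factorial) := by
  induction m with
  | zero =>
    intro r hr
    have h : {y : Fin 0 → ℝ | (∀ j, 0 ≤ y j) ∧ ∑ j, y j ≤ r} = Set.univ := by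
      ext y; simp [Fin.elim0, hr, Finset.univ_eq_empty]
    rw [h, volume_pi, Measure.pi_univ]
    simp [Nat.factorial]
  | succ m ih =>
    intro r hr
    set e := MeasurableEquiv.piFinSuccAbove (fun _ : Fin (m+1) => ℝ) 0 with he
    have mp := MeasureTheory.volume_preserving_piFinSuccAbove (fun _ : Fin (m+1) => ℝ) 0
    set T : Set (ℝ × (Fin m → ℝ)) :=
      {p | 0 ≤ p.1 ∧ (∀ j, 0 ≤ p.2 j) ∧ p.1 + ∑ j, p.2 j ≤ r} with hTdef
    have hT : MeasurableSet T := by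
      have : T = {p : ℝ × (Fin m → ℝ) | 0 ≤ p.1} ∩
          ((⋂ j, {p : ℝ × (Fin m → ℝ) | 0 ≤ p.2 j}) ∩
            {p : ℝ × (Fin m → ℝ) | p.1 + ∑ j, p.2 j ≤ r}) := by
        ext p; simp [hTdef, Set.mem_iInter, and_assoc]
      rw [this]
      refine (measurableSet_le measurable_const measurable_fst).inter
        (((MeasurableSet.iInter fun j => measurableSet_le measurable_const
          ((measurable_pi_apply j).comp measurable_snd)).inter
          (measurableSet_le (measurable_fst.add
            (Finset.measurable_sum _ fun j _ => (measurable_pi_apply j).comp measurable_snd))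
            measurable_const)))
    have hpre : {y : Fin (m+1) → ℝ | (∀ j, 0 ≤ y j) ∧ ∑ j, y j ≤ r} = e ⁻¹' T := by
      ext σ
      simp only [Set.mem_preimage, hTdef, Set.mem_setOf_eq,
        MeasurableEquiv.piFinSuccAbove_apply, he]
      rw [Fin.forall_fin_succ, Fin.sum_univ_succ]
      simp [Fin.succAbove_zero, Fin.tail, and_assoc]
    rw [hpre, mp.measure_preimage hT.nullMeasurableSet]
    have hvol : (volume : Measure (ℝ × (Fin m → ℝ))) = (volume : Measure ℝ).prod volume := rfl
    rw [hvol, Measure.prod_apply hT]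
    have hslice : (fun x : ℝ => volume (Prod.mk x ⁻¹' T))
        = Set.indicator (Set.Icc 0 r) (fun x => ENNReal.ofReal ((r - x) ^ m / m.factorial)) := by
      ext x
      by_cases hx : x ∈ Set.Icc (0:ℝ) r
      · have hx0 : (0:ℝ) ≤ x := hx.1
        have hxr : x ≤ r := hx.2
        have : Prod.mk x ⁻¹' T = {y : Fin m → ℝ | (∀ j, 0 ≤ y j) ∧ ∑ j, y j ≤ r - x} := by
          ext y
          simp only [Set.mem_preimage, hTdef, Set.mem_setOf_eq]
          constructor
          · rintro ⟨-, h1, h2⟩; exact ⟨h1, by linarith⟩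
          · rintro ⟨h1, h2⟩; exact ⟨hx0, h1, by linarith⟩
        rw [this, ih (by linarith), Set.indicator_of_mem hx]
      · rw [Set.indicator_of_notMem hx]
        rcases lt_or_ge x 0 with h0 | h0
        · have : Prod.mk x ⁻¹' T = ∅ := by
            ext y; simp only [Set.mem_preimage, hTdef, Set.mem_setOf_eq, Set.mem_empty_iff_false,
              iff_false]
            rintro ⟨h, -, -⟩; linarith
          simp [this]
        · have hrx : r - x < 0 := by
            simp only [Set.mem_Icc, not_and, not_le] at hx
            linarith [hx h0]
          have : Prod.mk x ⁻¹' T = ∅ := by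
            ext y; simp only [Set.mem_preimage, hTdef, Set.mem_setOf_eq, Set.mem_empty_iff_false,
              iff_false]
            rintro ⟨-, h1, h2⟩
            have : (0:ℝ) ≤ ∑ j, y j := Finset.sum_nonneg fun j _ => h1 j
            linarith
          simp [this]
    rw [hslice, lintegral_indicator measurableSet_Icc]
    have hnn : (0:ℝ → ℝ) ≤ᵐ[volume.restrict (Set.Icc 0 r)] fun x => (r - x) ^ m / m.factorial := by
      refine (ae_restrict_iff' measurableSet_Icc).2 (Filter.Eventually.of_forall fun x hx => ?_)
      have : (0:ℝ) ≤ (r - x) ^ m := pow_nonneg (by linarith [hx.2]) m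
      positivity
    have hint : IntegrableOn (fun x => (r - x) ^ m / m.factorial) (Set.Icc 0 r) volume := by
      apply Continuous.integrableOn_Icc
      continuity
    rw [← MeasureTheory.ofReal_integral_eq_lintegral_ofReal hint hnn]
    congr 1
    rw [MeasureTheory.integral_Icc_eq_integral_Ioc, ← intervalIntegral.integral_of_le hr]
    have : ∫ x in (0:ℝ)..r, (r - x) ^ m / m.factorial
        = (∫ x in (0:ℝ)..r, (r - x) ^ m) / m.factorial := intervalIntegral.integral_div _ _
    rw [this, intervalIntegral.integral_comp_sub_left (fun u => u ^ m) r]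
    simp only [sub_zero, sub_self]
    rw [integral_pow]
    rw [div_div]
    congr 1
    · ring
    · push_cast [Nat.factorial_succ]
      ring

lemma orthant_measurable (q : ℕ) : MeasurableSet {u : Fin q → ℝ | ∀ j, 0 ≤ u j} := by
  have : {u : Fin q → ℝ | ∀ j, 0 ≤ u j} = ⋂ j, {u : Fin q → ℝ | 0 ≤ u j} := by
    ext u; simp [Set.mem_iInter]
  rw [this]
  exact MeasurableSet.iInter fun j => measurableSet_le measurable_const (measurable_pi_apply j)

lemma stepC (q m : ℕ) (hq : 1 ≤ q)
    (f : (Fin q → ℝ) → ℂ) (hf : Continuous f)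
    (C : ℝ) (hC : 0 ≤ C)
    (hdecC : ∀ u : Fin q → ℝ, (∀ j, 0 ≤ u j) → ‖f u‖ ≤ C / (1 + ‖u‖) ^ (q + 1)) :
    Filter.Tendsto
      (fun t : ℝ => ∫ u : Fin q → ℝ,
        Set.indicator {u : Fin q → ℝ | (∀ j, 0 ≤ u j) ∧ ∑ j, u j ≤ t ^ 2}
          (fun u => (((1 - (∑ j, u j) / t ^ 2) ^ m / m.factorial : ℝ)) • f u) u)
      Filter.atTop
      (nhds (((m.factorial : ℝ))⁻¹ • ∫ u in {u : Fin q → ℝ | ∀ j, 0 ≤ u j}, f u)) := by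
  have hmeas_orth := orthant_measurable q
  -- the limit function
  set flim : (Fin q → ℝ) → ℂ :=
    Set.indicator {u : Fin q → ℝ | ∀ j, 0 ≤ u j}
      (fun u => ((m.factorial : ℝ))⁻¹ • f u) with hflim
  have hlim_int : ∫ u, flim u
      = ((m.factorial : ℝ))⁻¹ • ∫ u in {u : Fin q → ℝ | ∀ j, 0 ≤ u j}, f u := by
    rw [hflim, integral_indicator hmeas_orth, integral_smul]
  rw [← hlim_int]
  set bound : (Fin q → ℝ) → ℝ :=
    Set.indicator {u : Fin q → ℝ | ∀ j, 0 ≤ u j}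
      (fun u => (m.factorial : ℝ)⁻¹ * (C / (1 + ‖u‖) ^ (q + 1))) with hbound
  apply tendsto_integral_filter_of_dominated_convergence bound
  · -- measurability
    filter_upwards with t
    have hc : Continuous fun u : Fin q → ℝ =>
        (((1 - (∑ j, u j) / t ^ 2) ^ m / m.factorial : ℝ)) • f u := by
      exact (((continuous_const.sub ((continuous_finset_sum Finset.univ
        fun j _ => continuous_apply j).div_const _)).pow m).div_const _).smul hf
    exact hc.aestronglyMeasurable.indicator (simplex_measurable q (t ^ 2))
  · -- bound
    filter_upwards [Filter.eventually_ge_atTop (1:ℝ)] with t ht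
    refine Filter.Eventually.of_forall fun u => ?_
    by_cases hu : ∀ j, 0 ≤ u j
    · have hbu : bound u = (m.factorial : ℝ)⁻¹ * (C / (1 + ‖u‖) ^ (q + 1)) := by
        rw [hbound]
        exact Set.indicator_of_mem (show u ∈ {u : Fin q → ℝ | ∀ j, 0 ≤ u j} from hu) _
      rw [hbu]
      by_cases hu2 : u ∈ {u : Fin q → ℝ | (∀ j, 0 ≤ u j) ∧ ∑ j, u j ≤ t ^ 2}
      · rw [Set.indicator_of_mem hu2, norm_smul]
        have ht2 : (0:ℝ) < t ^ 2 := by positivity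
        have hsum0 : (0:ℝ) ≤ ∑ j, u j := Finset.sum_nonneg fun j _ => hu j
        have h1 : (0:ℝ) ≤ 1 - (∑ j, u j) / t ^ 2 := by
          rw [sub_nonneg, div_le_one ht2]; exact hu2.2
        have h2 : 1 - (∑ j, u j) / t ^ 2 ≤ 1 := by
          have : (0:ℝ) ≤ (∑ j, u j) / t ^ 2 := div_nonneg hsum0 ht2.le
          linarith
        have hfac : (0:ℝ) < m.factorial := by positivity
        have hA : ‖((1 - (∑ j, u j) / t ^ 2) ^ m / m.factorial : ℝ)‖ ≤ (m.factorial : ℝ)⁻¹ := by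
          rw [Real.norm_eq_abs, abs_div, abs_of_nonneg (pow_nonneg h1 m), abs_of_pos hfac,
            div_le_iff₀ hfac, inv_mul_cancel₀ hfac.ne']
          exact pow_le_one₀ h1 h2
        exact mul_le_mul hA (hdecC u hu) (norm_nonneg _) (by positivity)
      · rw [Set.indicator_of_notMem hu2]
        simp only [norm_zero]
        positivity
    · have hu2 : u ∉ {u : Fin q → ℝ | (∀ j, 0 ≤ u j) ∧ ∑ j, u j ≤ t ^ 2} :=
        fun h => hu h.1
      have hbu : bound u = 0 := by
        rw [hbound]
        exact Set.indicator_of_notMem (show u ∉ {u : Fin q → ℝ | ∀ j, 0 ≤ u j} from hu) _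
      rw [Set.indicator_of_notMem hu2, hbu]
      simp
  · -- integrability of bound
    rw [hbound]
    apply Integrable.indicator _ hmeas_orth
    have key : Integrable (fun u : Fin q → ℝ => (1 + ‖u‖) ^ (-(q + 1 : ℝ))) volume := by
      apply integrable_one_add_norm (E := Fin q → ℝ)
      rw [show Module.finrank ℝ (Fin q → ℝ) = q by simp]
      exact_mod_cast Nat.lt_succ_self q
    have : (fun u : Fin q → ℝ => (m.factorial : ℝ)⁻¹ * (C / (1 + ‖u‖) ^ (q + 1)))
        = fun u => ((m.factorial : ℝ)⁻¹ * C) * (1 + ‖u‖) ^ (-(q + 1 : ℝ)) := by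
      ext u
      have h1 : (0:ℝ) < 1 + ‖u‖ := by positivity
      rw [Real.rpow_neg h1.le, ← Real.rpow_natCast (1 + ‖u‖) (q + 1)]
      push_cast
      field_simp
    rw [this]
    exact key.const_mul _
  · -- pointwise convergence
    refine Filter.Eventually.of_forall fun u => ?_
    by_cases hu : ∀ j, 0 ≤ u j
    · have hlimval : flim u = ((m.factorial : ℝ))⁻¹ • f u :=
        Set.indicator_of_mem (show u ∈ {u : Fin q → ℝ | ∀ j, 0 ≤ u j} from hu) _
      rw [hlimval]
      have heq : (fun t : ℝ => (((1 - (∑ j, u j) / t ^ 2) ^ m / m.factorial : ℝ)) • f u)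
          =ᶠ[Filter.atTop] fun t : ℝ =>
          Set.indicator {u : Fin q → ℝ | (∀ j, 0 ≤ u j) ∧ ∑ j, u j ≤ t ^ 2}
            (fun u => (((1 - (∑ j, u j) / t ^ 2) ^ m / m.factorial : ℝ)) • f u) u := by
        filter_upwards [Filter.eventually_ge_atTop (max 1 (∑ j, u j))] with t ht
        have ht1 : (1:ℝ) ≤ t := le_trans (le_max_left _ _) ht
        have hts : (∑ j, u j) ≤ t := le_trans (le_max_right _ _) ht
        have : (∑ j, u j) ≤ t ^ 2 := by nlinarith
        exact (Set.indicator_of_mem (show u ∈ {u : Fin q → ℝ |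
          (∀ j, 0 ≤ u j) ∧ ∑ j, u j ≤ t ^ 2} from ⟨hu, this⟩)
          (fun u => (((1 - (∑ j, u j) / t ^ 2) ^ m / m.factorial : ℝ)) • f u)).symm
      refine Filter.Tendsto.congr' heq ?_
      have h1 : Filter.Tendsto (fun t : ℝ => (∑ j, u j) / t ^ 2) Filter.atTop (nhds 0) := by
        simp only [div_eq_mul_inv]
        rw [show (0:ℝ) = (∑ j, u j) * 0 by ring]
        exact Filter.Tendsto.const_mul _
          (Filter.Tendsto.inv_tendsto_atTop (Filter.tendsto_pow_atTop two_ne_zero))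
      have h2 : Filter.Tendsto (fun t : ℝ => ((1 - (∑ j, u j) / t ^ 2) ^ m / m.factorial : ℝ))
          Filter.atTop (nhds ((m.factorial : ℝ))⁻¹) := by
        have : Filter.Tendsto (fun t : ℝ => (1 - (∑ j, u j) / t ^ 2 : ℝ))
            Filter.atTop (nhds 1) := by
          have := (tendsto_const_nhds (x := (1:ℝ)) (f := Filter.atTop (α := ℝ))).sub h1
          simpa using this
        have := (this.pow m).div_const (m.factorial : ℝ)
        simpa using this
      exact h2.smul_const (f u)
    · have h0 : ∀ t : ℝ,
          Set.indicator {u : Fin q → ℝ | (∀ j, 0 ≤ u j) ∧ ∑ j, u j ≤ t ^ 2}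
            (fun u => (((1 - (∑ j, u j) / t ^ 2) ^ m / m.factorial : ℝ)) • f u) u = 0 :=
        fun t => Set.indicator_of_notMem (fun h => hu h.1) _
      have hl : flim u = 0 := Set.indicator_of_notMem (show u ∉ {u : Fin q → ℝ | ∀ j, 0 ≤ u j} from hu) _
      rw [hl]
      simp only [h0]
      exact tendsto_const_nhds

lemma stepA (q m : ℕ) (f : (Fin q → ℝ) → ℂ) (hf : Continuous f)
    (C : ℝ) (hbd : ∀ u : Fin q → ℝ, (∀ j, 0 ≤ u j) → ‖f u‖ ≤ C)
    (t : ℝ) (hqn : q ≤ q + m) :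
    (∫ σ in {σ : Fin (q+m) → ℝ | (∀ j, 0 ≤ σ j) ∧ ∑ j, σ j ≤ 1},
       f (fun j => t ^ 2 * σ (Fin.castLE hqn j)))
     = ∫ x in {x : Fin q → ℝ | (∀ j, 0 ≤ x j) ∧ ∑ j, x j ≤ 1},
        ((((1 - ∑ j, x j) ^ m / m.factorial : ℝ)) • f (fun j => t ^ 2 * x j)) := by
  classical
  set E : (Fin (q+m) → ℝ) ≃ᵐ (Fin q → ℝ) × (Fin m → ℝ) :=
    (MeasurableEquiv.piCongrLeft (fun _ : Fin (q+m) => ℝ) finSumFinEquiv).symm.trans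
      (MeasurableEquiv.sumPiEquivProdPi fun _ : Fin q ⊕ Fin m => ℝ) with hE
  have mpE : MeasurePreserving (⇑E) volume volume := by
    have h1 := (MeasureTheory.volume_measurePreserving_piCongrLeft
      (fun _ : Fin (q+m) => ℝ) finSumFinEquiv).symm
        (MeasurableEquiv.piCongrLeft (fun _ : Fin (q+m) => ℝ) finSumFinEquiv)
    have h2 := MeasureTheory.volume_measurePreserving_sumPiEquivProdPi
      (fun _ : Fin q ⊕ Fin m => ℝ)
    exact h2.comp h1
  have hE1 : ∀ (σ : Fin (q+m) → ℝ) (j : Fin q), (E σ).1 j = σ (Fin.castAdd m j) := by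
    intro σ j
    simp [hE, MeasurableEquiv.trans, MeasurableEquiv.sumPiEquivProdPi,
      Equiv.sumPiEquivProdPi, MeasurableEquiv.piCongrLeft, Equiv.piCongrLeft_symm_apply]
  have hE2 : ∀ (σ : Fin (q+m) → ℝ) (k : Fin m), (E σ).2 k = σ (Fin.natAdd q k) := by
    intro σ k
    simp [hE, MeasurableEquiv.trans, MeasurableEquiv.sumPiEquivProdPi,
      Equiv.sumPiEquivProdPi, MeasurableEquiv.piCongrLeft, Equiv.piCongrLeft_symm_apply]
  set S : Set (Fin (q+m) → ℝ) := {σ | (∀ j, 0 ≤ σ j) ∧ ∑ j, σ j ≤ 1} with hSdef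
  have hS : MeasurableSet S := simplex_measurable (q+m) 1
  set T : Set ((Fin q → ℝ) × (Fin m → ℝ)) :=
    {p | (∀ j, 0 ≤ p.1 j) ∧ (∀ k, 0 ≤ p.2 k) ∧ (∑ j, p.1 j) + ∑ k, p.2 k ≤ 1} with hTdef
  have hT : MeasurableSet T := by
    have e1 : MeasurableSet (⋂ j, {p : (Fin q → ℝ) × (Fin m → ℝ) | 0 ≤ p.1 j}) :=
      MeasurableSet.iInter fun j =>
        measurableSet_le measurable_const (measurable_fst.eval)
    have e2 : MeasurableSet (⋂ k, {p : (Fin q → ℝ) × (Fin m → ℝ) | 0 ≤ p.2 k}) :=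
      MeasurableSet.iInter fun k =>
        measurableSet_le measurable_const (measurable_snd.eval)
    have e3 : MeasurableSet {p : (Fin q → ℝ) × (Fin m → ℝ) | (∑ j, p.1 j) + ∑ k, p.2 k ≤ 1} :=
      measurableSet_le ((Finset.measurable_sum Finset.univ fun j _ =>
        (measurable_fst.eval : Measurable fun p : (Fin q → ℝ) × (Fin m → ℝ) => p.1 j)).add
        (Finset.measurable_sum Finset.univ fun k _ =>
        (measurable_snd.eval : Measurable fun p : (Fin q → ℝ) × (Fin m → ℝ) => p.2 k)))
        measurable_const
    have : T = (⋂ j, {p : (Fin q → ℝ) × (Fin m → ℝ) | 0 ≤ p.1 j}) ∩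
        ((⋂ k, {p : (Fin q → ℝ) × (Fin m → ℝ) | 0 ≤ p.2 k}) ∩
          {p : (Fin q → ℝ) × (Fin m → ℝ) | (∑ j, p.1 j) + ∑ k, p.2 k ≤ 1}) := by
      ext p; simp [hTdef, Set.mem_iInter, and_assoc]
    rw [this]; exact e1.inter (e2.inter e3)
  set G : (Fin q → ℝ) × (Fin m → ℝ) → ℂ :=
    Set.indicator T (fun p => f (fun j => t ^ 2 * p.1 j)) with hGdef
  have hmem : ∀ σ : Fin (q+m) → ℝ, σ ∈ S ↔ E σ ∈ T := by
    intro σ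
    constructor
    · rintro ⟨h1, h2⟩
      refine ⟨fun j => by rw [hE1]; exact h1 _, fun k => by rw [hE2]; exact h1 _, ?_⟩
      have : (∑ j, (E σ).1 j) + ∑ k, (E σ).2 k = ∑ i, σ i := by
        simp only [hE1, hE2]
        rw [Fin.sum_univ_add]
      rw [this]; exact h2
    · rintro ⟨h1, h2, h3⟩
      constructor
      · intro i
        rcases finSumFinEquiv.surjective i with ⟨s, rfl⟩
        cases s with
        | inl j => have := h1 j; rwa [hE1] at this
        | inr k => have := h2 k; rwa [hE2] at this
      · have : (∑ j, (E σ).1 j) + ∑ k, (E σ).2 k = ∑ i, σ i := by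
          simp only [hE1, hE2]
          rw [Fin.sum_univ_add]
        rw [← this]; exact h3
  have key1 : ∀ σ, Set.indicator S (fun σ => f (fun j => t ^ 2 * σ (Fin.castLE hqn j))) σ
      = G (E σ) := by
    intro σ
    by_cases hσ : σ ∈ S
    · rw [Set.indicator_of_mem hσ, hGdef, Set.indicator_of_mem ((hmem σ).1 hσ)]
      congr 1
    · rw [Set.indicator_of_notMem hσ, hGdef,
        Set.indicator_of_notMem (fun h => hσ ((hmem σ).2 h))]
  have hGint : Integrable G volume := by
    refine IntegrableOn.integrable_indicator ?_ hT
    refine Measure.integrableOn_of_bounded (M := C) ?_ ?_ ?_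
    · -- finite measure
      have hsub : T ⊆ (Set.univ.pi fun _ : Fin q => Set.Icc (0:ℝ) 1) ×ˢ
          (Set.univ.pi fun _ : Fin m => Set.Icc (0:ℝ) 1) := by
        rintro ⟨x, y⟩ ⟨h1, h2, h3⟩
        have hx : (0:ℝ) ≤ ∑ j, x j := Finset.sum_nonneg fun j _ => h1 j
        have hy : (0:ℝ) ≤ ∑ k, y k := Finset.sum_nonneg fun k _ => h2 k
        constructor
        · intro j _
          exact ⟨h1 j, by
            have hle : x j ≤ ∑ j, x j :=
              Finset.single_le_sum (fun i _ => h1 i) (Finset.mem_univ j)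
            linarith⟩
        · intro k _
          exact ⟨h2 k, by
            have hle : y k ≤ ∑ k, y k :=
              Finset.single_le_sum (fun i _ => h2 i) (Finset.mem_univ k)
            linarith⟩
      refine ne_of_lt (lt_of_le_of_lt (measure_mono hsub) ?_)
      rw [MeasureTheory.Measure.volume_eq_prod, Measure.prod_prod, volume_pi_pi, volume_pi_pi]
      simp [Real.volume_Icc]
    · -- measurable
      exact (hf.comp (continuous_pi fun j =>
        (continuous_const.mul ((continuous_apply j).comp continuous_fst)))).aestronglyMeasurable
    · -- bound
      refine (ae_restrict_iff' hT).2 (Filter.Eventually.of_forall fun p hp => ?_)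
      refine hbd _ fun j => ?_
      have := hp.1 j
      positivity
  have step1 : (∫ σ in S, f (fun j => t ^ 2 * σ (Fin.castLE hqn j))) = ∫ p, G p := by
    rw [← integral_indicator hS]
    have : (fun σ => Set.indicator S (fun σ => f (fun j => t ^ 2 * σ (Fin.castLE hqn j))) σ)
        = fun σ => G (E σ) := funext key1
    rw [this]
    exact mpE.integral_comp E.measurableEmbedding G
  have hGprod : Integrable G ((volume : Measure (Fin q → ℝ)).prod volume) := by
    rwa [MeasureTheory.Measure.volume_eq_prod] at hGint
  have step2 : ∫ p, G p = ∫ x, ∫ y, G (x, y) := by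
    rw [MeasureTheory.Measure.volume_eq_prod]
    exact MeasureTheory.integral_prod G hGprod
  have inner : ∀ x : Fin q → ℝ, (∫ y, G (x, y))
      = Set.indicator {x : Fin q → ℝ | (∀ j, 0 ≤ x j) ∧ ∑ j, x j ≤ 1}
          (fun x => (((1 - ∑ j, x j) ^ m / m.factorial : ℝ)) • f (fun j => t ^ 2 * x j)) x := by
    intro x
    have hGxy : (fun y => G (x, y)) = Set.indicator
        {y : Fin m → ℝ | (∀ j, 0 ≤ x j) ∧ (∀ k, 0 ≤ y k) ∧ (∑ j, x j) + ∑ k, y k ≤ 1}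
        (fun _ => f (fun j => t ^ 2 * x j)) := by
      funext y
      by_cases h : (x, y) ∈ T
      · rw [hGdef, Set.indicator_of_mem h, Set.indicator_of_mem (show y ∈ _ from h)]
      · rw [hGdef, Set.indicator_of_notMem h, Set.indicator_of_notMem (show y ∉ _ from h)]
    rw [hGxy]
    by_cases hx : (∀ j, 0 ≤ x j) ∧ ∑ j, x j ≤ 1
    · have hA : {y : Fin m → ℝ | (∀ j, 0 ≤ x j) ∧ (∀ k, 0 ≤ y k) ∧ (∑ j, x j) + ∑ k, y k ≤ 1}
          = {y : Fin m → ℝ | (∀ k, 0 ≤ y k) ∧ ∑ k, y k ≤ 1 - ∑ j, x j} := by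
        ext y
        constructor
        · rintro ⟨-, h1, h2⟩; exact ⟨h1, by linarith⟩
        · rintro ⟨h1, h2⟩; exact ⟨hx.1, h1, by linarith⟩
      rw [hA, integral_indicator_const _ (simplex_measurable m _), measureReal_def,
        simplex_volume m (by linarith [hx.2]),
        Set.indicator_of_mem (show x ∈ {x : Fin q → ℝ | (∀ j, 0 ≤ x j) ∧ ∑ j, x j ≤ 1} from hx)]
      rw [ENNReal.toReal_ofReal]
      have : (0:ℝ) ≤ 1 - ∑ j, x j := by linarith [hx.2]
      positivity
    · rw [Set.indicator_of_notMem
        (show x ∉ {x : Fin q → ℝ | (∀ j, 0 ≤ x j) ∧ ∑ j, x j ≤ 1} from hx)]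
      rcases not_and_or.mp hx with h1 | h2
      · have hA : {y : Fin m → ℝ | (∀ j, 0 ≤ x j) ∧ (∀ k, 0 ≤ y k) ∧ (∑ j, x j) + ∑ k, y k ≤ 1}
            = ∅ := by
          ext y
          simp only [Set.mem_setOf_eq, Set.mem_empty_iff_false, iff_false]
          rintro ⟨hp, -, -⟩; exact h1 hp
        rw [hA]; simp
      · have hA : {y : Fin m → ℝ | (∀ j, 0 ≤ x j) ∧ (∀ k, 0 ≤ y k) ∧ (∑ j, x j) + ∑ k, y k ≤ 1}
            = ∅ := by
          ext y
          simp only [Set.mem_setOf_eq, Set.mem_empty_iff_false, iff_false]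
          rintro ⟨-, hy, hs⟩
          have : (0:ℝ) ≤ ∑ k, y k := Finset.sum_nonneg fun k _ => hy k
          have h2' : ¬ ∑ j, x j ≤ 1 := h2
          push_neg at h2'
          linarith
        rw [hA]; simp
  rw [step1, step2]
  simp only [inner]
  rw [integral_indicator (simplex_measurable q 1)]

lemma stepB (q m : ℕ) (f : (Fin q → ℝ) → ℂ) (t : ℝ) (ht : 0 < t) :
    (t ^ (2 * q) : ℝ) • ∫ x in {x : Fin q → ℝ | (∀ j, 0 ≤ x j) ∧ ∑ j, x j ≤ 1},
        ((((1 - ∑ j, x j) ^ m / m.factorial : ℝ)) • f (fun j => t ^ 2 * x j))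
    = ∫ u, Set.indicator {u : Fin q → ℝ | (∀ j, 0 ≤ u j) ∧ ∑ j, u j ≤ t ^ 2}
        (fun u => (((1 - (∑ j, u j) / t ^ 2) ^ m / m.factorial : ℝ)) • f u) u := by
  have ht2 : (0:ℝ) < t ^ 2 := by positivity
  set g : (Fin q → ℝ) → ℂ :=
    Set.indicator {u : Fin q → ℝ | (∀ j, 0 ≤ u j) ∧ ∑ j, u j ≤ t ^ 2}
      (fun u => (((1 - (∑ j, u j) / t ^ 2) ^ m / m.factorial : ℝ)) • f u) with hg
  have key : ∫ x in {x : Fin q → ℝ | (∀ j, 0 ≤ x j) ∧ ∑ j, x j ≤ 1},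
      ((((1 - ∑ j, x j) ^ m / m.factorial : ℝ)) • f (fun j => t ^ 2 * x j))
      = ∫ x, g (t ^ 2 • x) := by
    rw [← integral_indicator (simplex_measurable q 1)]
    congr 1
    funext x
    have hcoord : (t ^ 2 • x) = fun j => t ^ 2 * x j := rfl
    have hsum : ∑ j, (t ^ 2 • x) j = t ^ 2 * ∑ j, x j := by
      rw [hcoord, ← Finset.mul_sum]
    by_cases hx : x ∈ {x : Fin q → ℝ | (∀ j, 0 ≤ x j) ∧ ∑ j, x j ≤ 1}
    · have hmem : t ^ 2 • x ∈ {u : Fin q → ℝ | (∀ j, 0 ≤ u j) ∧ ∑ j, u j ≤ t ^ 2} := by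
        refine ⟨fun j => ?_, ?_⟩
        · exact mul_nonneg ht2.le (hx.1 j)
        · rw [hsum]
          calc t ^ 2 * ∑ j, x j ≤ t ^ 2 * 1 := by
                exact mul_le_mul_of_nonneg_left hx.2 ht2.le
            _ = t ^ 2 := mul_one _
      rw [Set.indicator_of_mem hx, hg, Set.indicator_of_mem hmem]
      rw [hsum]
      congr 2
      field_simp
    · have hmem : t ^ 2 • x ∉ {u : Fin q → ℝ | (∀ j, 0 ≤ u j) ∧ ∑ j, u j ≤ t ^ 2} := by
        intro hmem
        refine hx ⟨fun j => ?_, ?_⟩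
        · have := hmem.1 j
          rw [hcoord] at this
          exact nonneg_of_mul_nonneg_right this ht2
        · have := hmem.2
          rw [hsum] at this
          exact le_of_mul_le_mul_left (by linarith) ht2
      rw [Set.indicator_of_notMem hx, hg, Set.indicator_of_notMem hmem]
  rw [key, MeasureTheory.Measure.integral_comp_smul volume g (t ^ 2)]
  rw [smul_smul]
  have hrank : Module.finrank ℝ (Fin q → ℝ) = q := by simp
  rw [hrank]
  have : t ^ (2 * q) * |((t ^ 2) ^ q)⁻¹| = 1 := by
    rw [abs_of_nonneg (by positivity), ← pow_mul]
    field_simp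
  rw [this, one_smul]


theorem stmt6 (n q : ℕ) (hq : 1 ≤ q) (hqn : q ≤ n)
    (f : (Fin q → ℝ) → ℂ) (hf : Continuous f)
    (hdec : ∀ N : ℕ, ∃ C : ℝ, 0 ≤ C ∧ ∀ u : Fin q → ℝ, (∀ j, 0 ≤ u j) →
      ‖f u‖ ≤ C / (1 + ‖u‖) ^ N) :
    Filter.Tendsto
      (fun t : ℝ => (t ^ (2 * q)) •
        ∫ σ in {σ : Fin n → ℝ | (∀ j, 0 ≤ σ j) ∧ ∑ j, σ j ≤ 1},
          f (fun j => t ^ 2 * σ (Fin.castLE hqn j)))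
      Filter.atTop
      (nhds ((((n - q).factorial : ℝ))⁻¹ •
        ∫ u in {u : Fin q → ℝ | ∀ j, 0 ≤ u j}, f u)) := by
  obtain ⟨m, rfl⟩ : ∃ m, n = q + m := ⟨n - q, (Nat.add_sub_cancel' hqn).symm⟩
  obtain ⟨C, hC, hdecC⟩ := hdec (q + 1)
  obtain ⟨C0, hC0, hbd0⟩ := hdec 0
  have hbd : ∀ u : Fin q → ℝ, (∀ j, 0 ≤ u j) → ‖f u‖ ≤ C0 := by
    intro u hu
    simpa using hbd0 u hu
  rw [show q + m - q = m from by omega]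
  refine Filter.Tendsto.congr' ?_ (stepC q m hq f hf C hC hdecC)
  filter_upwards [Filter.eventually_gt_atTop (0:ℝ)] with t ht
  rw [stepA q m f hf C0 hbd t hqn, stepB q m f t ht]
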